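/- Gallai-Edmonds partition independence: in a bipartite graph G1 with maximum matching M, classify a vertex as even (resp. odd) if some alternating path of even (resp. odd) length from an M-unmatched vertex reaches it, and unreachable otherwise. Then the sets of even, odd, and unreachable vertices are the same for every maximum matching of G1. -/

import Mathlib

universe u v

/-- A matching assigns to each person at most one item, injectively on items. -/
def IsMatching {α β : Type*} (M : α → Option β) : Prop :=
  ∀ a a' b, M a = some b → M a' = some b → a = a'

/-- A matching using only edges of the bipartite graph `E`. -/
def IsMatchingOn {α β : Type*} (E : α → β → Prop) (M : α → Option β) : Prop :=
  (∀ a b, M a = some b → E a b) ∧ IsMatching M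

/-- Number of matched people (= number of edges of the matching). -/
noncomputable def msize {α β : Type*} [Fintype α] (M : α → Option β) : ℕ :=
  Nat.card {a // (M a).isSome}

/-- A maximum cardinality matching of the bipartite graph `E`. -/
def IsMaxMatchingOn {α β : Type*} [Fintype α] (E : α → β → Prop) (M : α → Option β) : Prop :=
  IsMatchingOn E M ∧ ∀ M', IsMatchingOn E M' → msize M' ≤ msize M

mutual
  /-- A person reachable from an `M`-unmatched vertex by an even-length alternating path
  (such paths start at an unmatched person). -/
  inductive EvenA {α : Type u} {β : Type v} (E : α → β → Prop) (M : α → Option β) : α → Prop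
    | base (a : α) : M a = none → EvenA E M a
    | step (a : α) (b : β) : OddB E M b → M a = some b → EvenA E M a
  /-- An item reachable from an `M`-unmatched vertex by an odd-length alternating path. -/
  inductive OddB {α : Type u} {β : Type v} (E : α → β → Prop) (M : α → Option β) : β → Prop
    | step (a : α) (b : β) : EvenA E M a → E a b → M a ≠ some b → OddB E M b
end

mutual
  /-- An item reachable from an `M`-unmatched vertex by an even-length alternating path
  (such paths start at an unmatched item). -/
  inductive EvenB {α : Type u} {β : Type v} (E : α → β → Prop) (M : α → Option β) : β → Prop
    | base (b : β) : (∀ a, M a ≠ some b) → EvenB E M b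
    | step (a : α) (b : β) : OddA E M a → M a = some b → EvenB E M b
  /-- A person reachable from an `M`-unmatched vertex by an odd-length alternating path. -/
  inductive OddA {α : Type u} {β : Type v} (E : α → β → Prop) (M : α → Option β) : α → Prop
    | step (a : α) (b : β) : EvenB E M b → E a b → M a ≠ some b → OddA E M a
end

/-- An unreachable person: no alternating path from an unmatched vertex reaches it. -/
def UnreachA {α β : Type*} (E : α → β → Prop) (M : α → Option β) (a : α) : Prop :=
  ¬ EvenA E M a ∧ ¬ OddA E M a

/-- An unreachable item: no alternating path from an unmatched vertex reaches it. -/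
def UnreachB {α β : Type*} (E : α → β → Prop) (M : α → Option β) (b : β) : Prop :=
  ¬ EvenB E M b ∧ ¬ OddB E M b

namespace GEProof

variable {α β : Type*}

/-! ### msize lemmas -/

lemma msize_eq [Fintype α] (M : α → Option β) :
    msize M = (Finset.univ.filter fun a => (M a).isSome).card := by
  rw [msize, Nat.card_eq_fintype_card, Fintype.card_subtype]

lemma msize_congr [Fintype α] {M N : α → Option β}
    (h : ∀ x, (M x).isSome = (N x).isSome) : msize M = msize N := by
  rw [msize_eq, msize_eq]
  apply Finset.card_bij (fun a _ => a) <;> simp [h]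

lemma msize_update [Fintype α] [DecidableEq α] (M : α → Option β) (a : α) (b : β) (ha : M a = none) :
    msize (fun x => if x = a then some b else M x) = msize M + 1 := by
  rw [msize_eq, msize_eq]
  have h : (Finset.univ.filter fun x => ((if x = a then some b else M x) : Option β).isSome)
      = insert a (Finset.univ.filter fun x => (M x).isSome) := by
    ext x
    by_cases hx : x = a <;> simp [hx, ha]
  rw [h, Finset.card_insert_of_notMem (by simp [ha])]

lemma msize_swap [Fintype α] [DecidableEq α] (M : α → Option β) (a a' : α) (b : β) (hne : a ≠ a')
    (h1 : M a' = none) (h2 : (M a).isSome) :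
    msize (fun x => if x = a' then some b else if x = a then none else M x) = msize M := by
  rw [msize_eq, msize_eq]
  have h : (Finset.univ.filter fun x =>
        ((if x = a' then some b else if x = a then none else M x) : Option β).isSome)
      = insert a' ((Finset.univ.filter fun x => (M x).isSome).erase a) := by
    ext x
    by_cases hx : x = a'
    · simp [hx]
    · by_cases hx' : x = a <;> simp [hx, hx', Ne.symm hne, h1]
  rw [h, Finset.card_insert_of_notMem (by simp [h1]),
    Finset.card_erase_add_one (by simp [h2])]


/-! ### Explicit paths on the B side (for `EvenB`/`OddA`) -/

inductive PB (E : α → β → Prop) (M : α → Option β) : β → List α → Prop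
  | base (b : β) : (∀ x, M x ≠ some b) → PB E M b []
  | cons (b b' : β) (x : α) (l : List α) : PB E M b' l → E x b' → M x ≠ some b' →
      M x = some b → x ∉ l → PB E M b (x :: l)

lemma PB_shorten {E : α → β → Prop} {M : α → Option β} {c : β} {l : List α}
    (h : PB E M c l) : ∀ x ∈ l, ∀ b, M x = some b → ∃ l₂, PB E M b (x :: l₂) := by
  induction h with
  | base b hb => simp
  | cons c c' y l hP hE hne hMy hyl ih =>
    intro x hx b hMb
    rcases List.mem_cons.1 hx with rfl | hx
    · rw [hMy] at hMb
      obtain rfl := Option.some.inj hMb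
      exact ⟨l, PB.cons c c' x l hP hE hne hMy hyl⟩
    · exact ih x hx b hMb

lemma PB_isSome {E : α → β → Prop} {M : α → Option β} {c : β} {l : List α}
    (h : PB E M c l) : ∀ x ∈ l, (M x).isSome := by
  induction h with
  | base b hb => simp
  | cons c c' y l hP hE hne hMy hyl ih =>
    intro x hx
    rcases List.mem_cons.1 hx with rfl | hx
    · simp [hMy]
    · exact ih x hx

lemma extractB_even {E : α → β → Prop} {M : α → Option β} {b : β} (h : EvenB E M b) :
    ∃ l, PB E M b l := by
  refine EvenB.rec (motive_1 := fun b _ => ∃ l, PB E M b l)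
    (motive_2 := fun a _ => ∃ b l, PB E M b l ∧ E a b ∧ M a ≠ some b) ?_ ?_ ?_ h
  · exact fun b hb => ⟨[], PB.base b hb⟩
  · rintro x b hodd hMx ⟨b', l, hP, hE, hne⟩
    by_cases hx : x ∈ l
    · obtain ⟨l₂, h₂⟩ := PB_shorten hP x hx b hMx
      exact ⟨x :: l₂, h₂⟩
    · exact ⟨x :: l, PB.cons b b' x l hP hE hne hMx hx⟩
  · rintro a b hev hE hne ⟨l, hP⟩
    exact ⟨b, l, hP, hE, hne⟩

lemma extractB_odd {E : α → β → Prop} {M : α → Option β} {a : α} (h : OddA E M a) :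
    ∃ b l, PB E M b l ∧ E a b ∧ M a ≠ some b := by
  refine OddA.rec (motive_1 := fun b _ => ∃ l, PB E M b l)
    (motive_2 := fun a _ => ∃ b l, PB E M b l ∧ E a b ∧ M a ≠ some b) ?_ ?_ ?_ h
  · exact fun b hb => ⟨[], PB.base b hb⟩
  · rintro x b hodd hMx ⟨b', l, hP, hE, hne⟩
    by_cases hx : x ∈ l
    · obtain ⟨l₂, h₂⟩ := PB_shorten hP x hx b hMx
      exact ⟨x :: l₂, h₂⟩
    · exact ⟨x :: l, PB.cons b b' x l hP hE hne hMx hx⟩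
  · rintro a b hev hE hne ⟨l, hP⟩
    exact ⟨b, l, hP, hE, hne⟩

/-- Flipping an even alternating path ending at item `b`: a same-size matching
leaving `b` uncovered, unchanged off the path. -/
lemma flipB [Fintype α] [DecidableEq α] {E : α → β → Prop} {M : α → Option β}
    (hM : IsMatchingOn E M) {b : β} {l : List α} (h : PB E M b l) :
    ∃ N, IsMatchingOn E N ∧ (∀ x, N x ≠ some b) ∧ (∀ x, x ∉ l → N x = M x) ∧
      (∀ x ∈ l, (N x).isSome) ∧
      (∀ x ∈ l, ∀ c, N x = some c → (∀ y, M y ≠ some c) ∨ ∃ y ∈ l, M y = some c) ∧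
      msize N = msize M := by
  induction h with
  | base b hb => exact ⟨M, hM, hb, fun _ _ => rfl, by simp, by simp, rfl⟩
  | cons b b' x l hP hE hne hMx hxl ih =>
    obtain ⟨N₁, hN₁, hnob', hoff, hsome, hI5, hsz⟩ := ih
    have hN₁x : N₁ x = M x := hoff x hxl
    refine ⟨fun y => if y = x then some b' else N₁ y, ⟨?_, ?_⟩, ?_, ?_, ?_, ?_, ?_⟩
    · intro y c hy
      by_cases h' : y = x
      · subst h'; simp only [if_pos rfl] at hy
        obtain rfl := Option.some.inj hy; exact hE
      · simp only [if_neg h'] at hy; exact hN₁.1 y c hy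
    · intro y z c hy hz
      by_cases hy' : y = x <;> by_cases hz' : z = x
      · subst hy'; subst hz'; rfl
      · subst hy'; simp only [if_pos rfl] at hy
        simp only [if_neg hz'] at hz
        obtain rfl := Option.some.inj hy
        exact absurd hz (hnob' z)
      · subst hz'; simp only [if_pos rfl] at hz
        simp only [if_neg hy'] at hy
        obtain rfl := Option.some.inj hz
        exact absurd hy (hnob' y)
      · simp only [if_neg hy'] at hy; simp only [if_neg hz'] at hz
        exact hN₁.2 y z c hy hz
    · -- nobody matched to b
      intro y hy
      by_cases h' : y = x
      · subst h'; simp only [if_pos rfl] at hy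
        obtain rfl := Option.some.inj hy
        exact hne hMx
      · simp only [if_neg h'] at hy
        by_cases hyl : y ∈ l
        · rcases hI5 y hyl b hy with h1 | ⟨z, hzl, hz⟩
          · exact h1 x hMx
          · exact hxl ((hM.2 z x b hz hMx) ▸ hzl)
        · rw [hoff y hyl] at hy
          exact h' (hM.2 y x b hy hMx)
    · intro y hy
      have h1 : y ≠ x := fun h' => hy (h' ▸ List.mem_cons_self)
      have h2 : y ∉ l := fun h' => hy (List.mem_cons_of_mem x h')
      simp only [if_neg h1]; exact hoff y h2
    · intro y hy
      rcases List.mem_cons.1 hy with rfl | hy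
      · simp
      · have h1 : y ≠ x := fun h' => hxl (h' ▸ hy)
        simp only [if_neg h1]; exact hsome y hy
    · intro y hy c hc
      rcases List.mem_cons.1 hy with rfl | hy
      · simp only [if_pos rfl] at hc
        obtain rfl := Option.some.inj hc
        cases hP with
        | base _ hb' => exact Or.inl hb'
        | cons _ c'' z l₂ hP₂ hE₂ hne₂ hMz hzl₂ =>
          exact Or.inr ⟨z, by simp, hMz⟩
      · have h1 : y ≠ x := fun h' => hxl (h' ▸ hy)
        simp only [if_neg h1] at hc
        rcases hI5 y hy c hc with h2 | ⟨z, hzl, hz⟩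
        · exact Or.inl h2
        · exact Or.inr ⟨z, List.mem_cons_of_mem x hzl, hz⟩
    · rw [← hsz]
      apply msize_congr
      intro y
      by_cases h' : y = x
      · subst h'; simp [hN₁x, hMx]
      · simp [h']

/-- Augmenting along an odd alternating path. -/
lemma aug [Fintype α] {E : α → β → Prop} {M : α → Option β} (hM : IsMatchingOn E M)
    {a : α} (ha : M a = none) (h : OddA E M a) :
    ∃ N, IsMatchingOn E N ∧ msize N = msize M + 1 := by
  classical
  obtain ⟨b, l, hP, hE, -⟩ := extractB_odd h
  obtain ⟨N₁, hN₁, hnob, hoff, hsome, hI5, hsz⟩ := flipB hM hP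
  have hal : a ∉ l := fun h' => by simpa [ha] using PB_isSome hP a h'
  have hN₁a : N₁ a = none := (hoff a hal).trans ha
  refine ⟨fun x => if x = a then some b else N₁ x, ⟨⟨?_, ?_⟩, ?_⟩⟩
  · intro y c hy
    by_cases h' : y = a
    · subst h'; simp only [if_pos rfl] at hy
      obtain rfl := Option.some.inj hy; exact hE
    · simp only [if_neg h'] at hy; exact hN₁.1 y c hy
  · intro y z c hy hz
    by_cases hy' : y = a <;> by_cases hz' : z = a
    · subst hy'; subst hz'; rfl
    · subst hy'; simp only [if_pos rfl] at hy
      simp only [if_neg hz'] at hz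
      obtain rfl := Option.some.inj hy
      exact absurd hz (hnob z)
    · subst hz'; simp only [if_pos rfl] at hz
      simp only [if_neg hy'] at hy
      obtain rfl := Option.some.inj hz
      exact absurd hy (hnob y)
    · simp only [if_neg hy'] at hy; simp only [if_neg hz'] at hz
      exact hN₁.2 y z c hy hz
  · rw [msize_update N₁ a b hN₁a, hsz]

lemma noAug [Fintype α] {E : α → β → Prop} {M : α → Option β}
    (hM : IsMaxMatchingOn E M) {a : α} (ha : M a = none) : ¬ OddA E M a := by
  intro h
  obtain ⟨N, hN, hsz⟩ := aug hM.1 ha h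
  have := hM.2 N hN
  omega


/-! ### Explicit paths on the A side (for `EvenA`/`OddB`) -/

inductive QA (E : α → β → Prop) (M : α → Option β) : α → List α → Prop
  | base (a : α) : M a = none → QA E M a []
  | cons (a a' : α) (l : List α) (b : β) : QA E M a' l → E a' b → M a' ≠ some b →
      M a = some b → a ∉ a' :: l → QA E M a (a' :: l)

lemma QA_notmem {E : α → β → Prop} {M : α → Option β} {a : α} {l : List α}
    (h : QA E M a l) : a ∉ l := by
  cases h with
  | base => simp
  | cons a a' l b hQ hE hne hMa hnm => exact hnm

lemma QA_shorten {E : α → β → Prop} {M : α → Option β} {a : α} {l : List α}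
    (h : QA E M a l) : ∀ x ∈ a :: l, ∃ l₂, QA E M x l₂ := by
  induction h with
  | base a ha =>
    intro x hx
    rcases List.mem_cons.1 hx with rfl | hx
    · exact ⟨[], QA.base x ha⟩
    · simp at hx
  | cons a a' l b hQ hE hne hMa hnm ih =>
    intro x hx
    rcases List.mem_cons.1 hx with rfl | hx
    · exact ⟨a' :: l, QA.cons x a' l b hQ hE hne hMa hnm⟩
    · exact ih x hx

lemma extractA_even {E : α → β → Prop} {M : α → Option β} {a : α} (h : EvenA E M a) :
    ∃ l, QA E M a l := by
  refine EvenA.rec (motive_1 := fun a _ => ∃ l, QA E M a l)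
    (motive_2 := fun b _ => ∃ a l, QA E M a l ∧ E a b ∧ M a ≠ some b) ?_ ?_ ?_ h
  · exact fun a ha => ⟨[], QA.base a ha⟩
  · rintro a b hodd hMa ⟨a', l, hQ, hE, hne⟩
    by_cases hx : a ∈ a' :: l
    · exact QA_shorten hQ a hx
    · exact ⟨a' :: l, QA.cons a a' l b hQ hE hne hMa hx⟩
  · rintro a b hev hE hne ⟨l, hQ⟩
    exact ⟨a, l, hQ, hE, hne⟩

/-- Flipping an even alternating path ending at person `a`: a same-size matching
leaving `a` uncovered. -/
lemma flipA [Fintype α] [DecidableEq α] {E : α → β → Prop} {M : α → Option β}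
    (hM : IsMatchingOn E M) {a : α} {l : List α} (h : QA E M a l) :
    ∃ N, IsMatchingOn E N ∧ N a = none ∧ (∀ x, x ∉ a :: l → N x = M x) ∧
      (∀ x ∈ l, (N x).isSome) ∧
      (∀ x ∈ l, ∀ c, N x = some c → ∃ y ∈ a :: l, M y = some c) ∧
      msize N = msize M := by
  induction h with
  | base a ha => exact ⟨M, hM, ha, fun _ _ => rfl, by simp, by simp, rfl⟩
  | cons a a' l b hQ hE hne hMa hnm ih =>
    obtain ⟨N₁, hN₁, hN₁a', hoff, hsome, hI5, hsz⟩ := ih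
    have hax : a ≠ a' := fun h' => hnm (h' ▸ List.mem_cons_self)
    have hal : a ∉ l := fun h' => hnm (List.mem_cons_of_mem a' h')
    have hN₁a : N₁ a = M a := hoff a hnm
    have hnobody : ∀ y, y ≠ a' → (fun x => if x = a' then some b else
        if x = a then none else N₁ x) y ≠ some b := by
      intro y hy hc
      simp only [if_neg hy] at hc
      by_cases hya : y = a
      · rw [if_pos hya] at hc; cases hc
      · rw [if_neg hya] at hc
        by_cases hyl : y ∈ l
        · obtain ⟨z, hz, hMz⟩ := hI5 y hyl b hc
          have : z = a := hM.2 z a b hMz hMa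
          exact hnm (this ▸ hz)
        · have : y ∉ a' :: l := by simp [hy, hyl]
          rw [hoff y this] at hc
          exact hya (hM.2 y a b hc hMa)
    refine ⟨fun x => if x = a' then some b else if x = a then none else N₁ x,
      ⟨?_, ?_⟩, ?_, ?_, ?_, ?_, ?_⟩
    · intro y c hy
      by_cases h1 : y = a'
      · subst h1; simp only [if_pos rfl] at hy
        obtain rfl := Option.some.inj hy; exact hE
      · simp only [if_neg h1] at hy
        by_cases h2 : y = a
        · rw [if_pos h2] at hy; cases hy
        · rw [if_neg h2] at hy; exact hN₁.1 y c hy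
    · intro y z c hy hz
      by_cases hy' : y = a' <;> by_cases hz' : z = a'
      · subst hy'; subst hz'; rfl
      · subst hy'; simp only [if_pos rfl] at hy
        obtain rfl := Option.some.inj hy
        exact absurd hz (hnobody z hz')
      · subst hz'; simp only [if_pos rfl] at hz
        obtain rfl := Option.some.inj hz
        exact absurd hy (hnobody y hy')
      · simp only [if_neg hy'] at hy; simp only [if_neg hz'] at hz
        by_cases hy2 : y = a
        · rw [if_pos hy2] at hy; cases hy
        · by_cases hz2 : z = a
          · rw [if_pos hz2] at hz; cases hz
          · rw [if_neg hy2] at hy; rw [if_neg hz2] at hz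
            exact hN₁.2 y z c hy hz
    · simp [hax, Ne.symm hax]
    · intro x hx
      have h1 : x ≠ a := fun h' => hx (h' ▸ List.mem_cons_self)
      have h2 : x ≠ a' := fun h' => hx (by simp [h'])
      have h3 : x ∉ a' :: l := fun h' => hx (List.mem_cons_of_mem a h')
      simp only [if_neg h2, if_neg h1]
      exact hoff x h3
    · intro x hx
      rcases List.mem_cons.1 hx with rfl | hx
      · simp
      · have h2 : x ≠ a' := fun h' => (QA_notmem hQ) (h' ▸ hx)
        have h1 : x ≠ a := fun h' => hal (h' ▸ hx)
        simp only [if_neg h2, if_neg h1]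
        exact hsome x hx
    · intro x hx c hc
      rcases List.mem_cons.1 hx with rfl | hx
      · simp only [if_pos rfl] at hc
        obtain rfl := Option.some.inj hc
        exact ⟨a, List.mem_cons_self, hMa⟩
      · have h2 : x ≠ a' := fun h' => (QA_notmem hQ) (h' ▸ hx)
        have h1 : x ≠ a := fun h' => hal (h' ▸ hx)
        simp only [if_neg h2, if_neg h1] at hc
        obtain ⟨y, hy, hMy⟩ := hI5 x hx c hc
        exact ⟨y, List.mem_cons_of_mem a hy, hMy⟩
    · rw [← hsz]
      rw [msize_swap N₁ a a' b hax hN₁a' (by rw [hN₁a, hMa]; rfl)]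


/-! ### Chasing chains between two matchings: A-side -/

inductive DA (M' N : α → Option β) : α → List α → Prop
  | base (x : α) : N x = none → DA M' N x []
  | cons (x y : α) (l : List α) (b : β) : DA M' N y l → M' y = some b → N x = some b →
      x ∉ y :: l → DA M' N x (y :: l)

lemma DA_notmem {M' N : α → Option β} {x : α} {l : List α} (h : DA M' N x l) : x ∉ l := by
  cases h with
  | base => simp
  | cons x y l b hD hM' hN hnm => exact hnm

lemma DA_nodup {M' N : α → Option β} {x : α} {l : List α} (h : DA M' N x l) :
    (x :: l).Nodup := by
  induction h with
  | base x hx => simp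
  | cons x y l b hD hM' hN hnm ih => exact List.nodup_cons.2 ⟨hnm, ih⟩

lemma DA_mem {M' N : α → Option β} {x : α} {l : List α} (h : DA M' N x l) :
    ∀ x' ∈ l, N x' = none ∨ ∃ c z, N x' = some c ∧ M' z = some c ∧ z ∈ l := by
  induction h with
  | base x hx => simp
  | cons x y l b hD hM' hN hnm ih =>
    intro x' hx'
    rcases List.mem_cons.1 hx' with rfl | hx'
    · cases hD with
      | base _ hy => exact Or.inl hy
      | cons _ z l₂ b₂ hD₂ hM'₂ hN₂ hnm₂ =>
        exact Or.inr ⟨b₂, z, hN₂, hM'₂, by simp⟩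
    · rcases ih x' hx' with h1 | ⟨c, z, h2, h3, h4⟩
      · exact Or.inl h1
      · exact Or.inr ⟨c, z, h2, h3, List.mem_cons_of_mem y h4⟩

lemma DA_fresh {M' N : α → Option β} (hM' : IsMatching M') {x x' : α} {l : List α} {b : β}
    (hD : DA M' N x l) (h1 : M' x = some b) (h2 : N x' = some b) : x' ∉ x :: l := by
  intro hmem
  rcases List.mem_cons.1 hmem with rfl | hmem
  · cases hD with
    | base _ hx => rw [h2] at hx; cases hx
    | cons _ y l₂ b₀ hD₂ hM'y hNx hnm =>
      rw [h2] at hNx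
      obtain rfl := Option.some.inj hNx
      exact hnm (by rw [hM' y x' _ hM'y h1]; simp)
  · rcases DA_mem hD x' hmem with h3 | ⟨c, z, h3, h4, h5⟩
    · rw [h2] at h3; cases h3
    · rw [h2] at h3
      obtain rfl := Option.some.inj h3
      have : z = x := hM' z x _ h4 h1
      exact DA_notmem hD (this ▸ h5)

lemma DA_descend {E : α → β → Prop} {M' N : α → Option β}
    (hN : IsMatchingOn E N) (hM' : IsMatchingOn E M') {x : α} {l : List α}
    (hD : DA M' N x l) : OddA E N x → ∃ x₀, N x₀ = none ∧ OddA E N x₀ := by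
  induction hD with
  | base x hx => exact fun ho => ⟨x, hx, ho⟩
  | cons x y l b hD hM'y hNx hnm ih =>
    intro ho
    have hEvB : EvenB E N b := EvenB.step x b ho hNx
    have hxy : x ≠ y := fun h' => hnm (h' ▸ List.mem_cons_self)
    have hOy : OddA E N y := OddA.step y b hEvB (hM'.1 y b hM'y)
      (fun hc => hxy (hN.2 x y b hNx hc))
    exact ih hOy

lemma chaseA [Fintype α] {E : α → β → Prop} {M' N : α → Option β}
    (hN : IsMaxMatchingOn E N) (hM' : IsMatchingOn E M') :
    ∀ (k : ℕ) (x : α) (l : List α), Fintype.card α + 1 ≤ l.length + k → DA M' N x l →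
      EvenA E M' x := by
  intro k
  induction k with
  | zero =>
    intro x l hlen hD
    exfalso
    have h1 := (DA_nodup hD).length_le_card
    simp only [List.length_cons] at h1
    omega
  | succ k ih =>
    intro x l hlen hD
    cases hM'x : M' x with
    | none => exact EvenA.base x hM'x
    | some b =>
      by_cases hex : ∃ x', N x' = some b
      · obtain ⟨x', hx'⟩ := hex
        have hfresh : x' ∉ x :: l := DA_fresh hM'.2 hD hM'x hx'
        have hD' : DA M' N x' (x :: l) := DA.cons x' x l b hD hM'x hx' hfresh
        have hev := ih x' (x :: l) (by simp only [List.length_cons]; omega) hD'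
        have hxx : x' ≠ x := fun h' => hfresh (h' ▸ List.mem_cons_self)
        have hOdd : OddB E M' b := OddB.step x' b hev (hN.1.1 x' b hx')
          (fun hc => hxx (hM'.2 x' x b hc hM'x))
        exact EvenA.step x b hOdd hM'x
      · push_neg at hex
        have hEvB : EvenB E N b := EvenB.base b hex
        have hOdd : OddA E N x := OddA.step x b hEvB (hM'.1 x b hM'x) (hex x)
        obtain ⟨x₀, h₀, hodd₀⟩ := DA_descend hN.1 hM' hD hOdd
        exact absurd hodd₀ (noAug hN h₀)

lemma chaseA_start [Fintype α] {E : α → β → Prop} {M' N : α → Option β}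
    (hN : IsMaxMatchingOn E N) (hM' : IsMatchingOn E M') {a : α} (ha : N a = none) :
    EvenA E M' a :=
  chaseA hN hM' (Fintype.card α + 1) a [] (by simp) (DA.base a ha)

/-! ### Chasing chains between two matchings: B-side -/

inductive DB (M' N : α → Option β) : β → List α → Prop
  | base (b : β) : (∀ x, N x ≠ some b) → DB M' N b []
  | cons (b : β) (y : α) (l : List α) (b₀ : β) : DB M' N b₀ l → M' y = some b₀ →
      N y = some b → y ∉ l → DB M' N b (y :: l)

lemma DB_nodup {M' N : α → Option β} {b : β} {l : List α} (h : DB M' N b l) : l.Nodup := by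
  induction h with
  | base b hb => simp
  | cons b y l b₀ hD hM' hN hnm ih => exact List.nodup_cons.2 ⟨hnm, ih⟩

lemma DB_mem {M' N : α → Option β} {b : β} {l : List α} (h : DB M' N b l) :
    ∀ y ∈ l, ∃ c, M' y = some c ∧ ((∀ x, N x ≠ some c) ∨ ∃ z ∈ l, N z = some c) := by
  induction h with
  | base b hb => simp
  | cons b y l b₀ hD hM'y hNy hnm ih =>
    intro y' hy'
    rcases List.mem_cons.1 hy' with rfl | hy'
    · refine ⟨b₀, hM'y, ?_⟩
      cases hD with
      | base _ hb₀ => exact Or.inl hb₀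
      | cons _ z l₂ b₁ hD₂ hM'z hNz hnm₂ =>
        exact Or.inr ⟨z, by simp, hNz⟩
    · obtain ⟨c, h1, h2⟩ := ih y' hy'
      refine ⟨c, h1, ?_⟩
      rcases h2 with h2 | ⟨z, h3, h4⟩
      · exact Or.inl h2
      · exact Or.inr ⟨z, List.mem_cons_of_mem y h3, h4⟩

lemma DB_fresh {M' N : α → Option β} (hM' : IsMatching M') (hN : IsMatching N)
    {b : β} {y : α} {l : List α} (hD : DB M' N b l) (h1 : M' y = some b) : y ∉ l := by
  intro hmem
  cases hD with
  | base _ hb => simp at hmem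
  | cons _ y₀ l₂ b₀ hD₂ hM'y₀ hNy₀ hnm =>
    rcases List.mem_cons.1 hmem with rfl | hmem
    · rw [h1] at hM'y₀
      obtain rfl := Option.some.inj hM'y₀
      cases hD₂ with
      | base _ hb₀ => exact hb₀ y hNy₀
      | cons _ z l₃ b₁ hD₃ hM'z hNz hnm₃ =>
        have hzy : z ≠ y := fun h' => hnm (h' ▸ (by simp : z ∈ z :: l₃))
        exact hzy (hN z y b (by exact hNz) hNy₀) |>.elim
    · obtain ⟨c, h2, h3⟩ := DB_mem hD₂ y hmem
      rw [h1] at h2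
      obtain rfl := Option.some.inj h2
      rcases h3 with h3 | ⟨z, h4, h5⟩
      · exact h3 y₀ hNy₀
      · have : z = y₀ := hN z y₀ _ h5 hNy₀
        exact hnm (this ▸ h4)

lemma DB_evenB {E : α → β → Prop} {M' N : α → Option β}
    (hN : IsMatchingOn E N) (hM' : IsMatchingOn E M') {b : β} {l : List α}
    (hD : DB M' N b l) : EvenB E N b := by
  induction hD with
  | base b hb => exact EvenB.base b hb
  | cons b y l b₀ hD hM'y hNy hnm ih =>
    have hbb₀ : b ≠ b₀ := by
      rintro rfl
      cases hD with
      | base _ hb₀ => exact hb₀ y hNy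
      | cons _ z l₂ b₁ hD₂ hM'z hNz hnm₂ =>
        have hzy : z ≠ y := fun h' => hnm (h' ▸ (by simp : z ∈ z :: l₂))
        exact hzy (hN.2 z y b hNz hNy)
    have hOy : OddA E N y := OddA.step y b₀ ih (hM'.1 y b₀ hM'y)
      (fun hc => hbb₀ (Option.some.inj ((hNy ▸ hc : some b = some b₀))))
    exact EvenB.step y b hOy hNy

lemma DB_head_cases {M' N : α → Option β} {b : β} {l : List α} (hD : DB M' N b l) :
    (∀ x, N x ≠ some b) ∨ ∃ z l₂, l = z :: l₂ ∧ N z = some b := by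
  cases hD with
  | base _ hb => exact Or.inl hb
  | cons _ y l₂ b₀ hD₂ hM'y hNy hnm => exact Or.inr ⟨y, l₂, rfl, hNy⟩

lemma chaseB [Fintype α] {E : α → β → Prop} {M' N : α → Option β}
    (hN : IsMaxMatchingOn E N) (hM' : IsMatchingOn E M') :
    ∀ (k : ℕ) (b : β) (l : List α), Fintype.card α + 1 ≤ l.length + k → DB M' N b l →
      EvenB E M' b := by
  intro k
  induction k with
  | zero =>
    intro b l hlen hD
    exfalso
    have h1 := (DB_nodup hD).length_le_card
    omega
  | succ k ih =>
    intro b l hlen hD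
    by_cases hown : ∃ y, M' y = some b
    · obtain ⟨y, hy⟩ := hown
      cases hNy : N y with
      | none =>
        have hOdd : OddA E N y := OddA.step y b (DB_evenB hN.1 hM' hD)
          (hM'.1 y b hy) (by simp [hNy])
        exact absurd hOdd (noAug hN hNy)
      | some b₁ =>
        have hfresh : y ∉ l := DB_fresh hM'.2 hN.1.2 hD hy
        have hD' : DB M' N b₁ (y :: l) := DB.cons b₁ y l b hD hy hNy hfresh
        have hev := ih b₁ (y :: l) (by simp only [List.length_cons]; omega) hD'
        have hbb₁ : b ≠ b₁ := by
          rintro rfl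
          rcases DB_head_cases hD with h1 | ⟨z, l₂, rfl, h2⟩
          · exact h1 y hNy
          · have : z = y := hN.1.2 z y b h2 hNy
            exact hfresh (this ▸ (by simp : z ∈ z :: l₂))
        have hOy : OddA E M' y := OddA.step y b₁ hev (hN.1.1 y b₁ hNy)
          (fun hc => hbb₁ (Option.some.inj ((hy ▸ hc : some b = some b₁))))
        exact EvenB.step y b hOy hy
    · push_neg at hown
      exact EvenB.base b hown

lemma chaseB_start [Fintype α] {E : α → β → Prop} {M' N : α → Option β}
    (hN : IsMaxMatchingOn E N) (hM' : IsMatchingOn E M') {b : β}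
    (hb : ∀ x, N x ≠ some b) : EvenB E M' b :=
  chaseB hN hM' (Fintype.card α + 1) b [] (by simp) (DB.base b hb)


/-! ### Transfer lemmas and main theorem -/

lemma evenA_mono [Fintype α] {E : α → β → Prop} {M M' : α → Option β}
    (hM : IsMaxMatchingOn E M) (hM' : IsMaxMatchingOn E M') {a : α}
    (h : EvenA E M a) : EvenA E M' a := by
  classical
  obtain ⟨l, hQ⟩ := extractA_even h
  obtain ⟨N, hN, hNa, -, -, -, hsz⟩ := flipA hM.1 hQ
  have hNmax : IsMaxMatchingOn E N := ⟨hN, fun K hK => (hM.2 K hK).trans hsz.ge⟩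
  exact chaseA_start hNmax hM'.1 hNa

lemma evenB_mono [Fintype α] {E : α → β → Prop} {M M' : α → Option β}
    (hM : IsMaxMatchingOn E M) (hM' : IsMaxMatchingOn E M') {b : β}
    (h : EvenB E M b) : EvenB E M' b := by
  classical
  obtain ⟨l, hP⟩ := extractB_even h
  obtain ⟨N, hN, hNb, -, -, -, hsz⟩ := flipB hM.1 hP
  have hNmax : IsMaxMatchingOn E N := ⟨hN, fun K hK => (hM.2 K hK).trans hsz.ge⟩
  exact chaseB_start hNmax hM'.1 hNb

lemma oddB_iff {E : α → β → Prop} {M : α → Option β} {b : β} :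
    OddB E M b ↔ ∃ a, EvenA E M a ∧ E a b := by
  constructor
  · rintro (⟨a, b, hev, hE, hne⟩)
    exact ⟨a, hev, hE⟩
  · rintro ⟨a, hev, hE⟩
    by_cases hab : M a = some b
    · cases hev with
      | base _ ha => rw [ha] at hab; cases hab
      | step _ b' hodd hab' =>
        rw [hab] at hab'
        obtain rfl := Option.some.inj hab'
        exact hodd
    · exact OddB.step a b hev hE hab

lemma oddA_iff {E : α → β → Prop} {M : α → Option β} (hM : IsMatching M) {a : α} :
    OddA E M a ↔ ∃ b, EvenB E M b ∧ E a b := by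
  constructor
  · rintro (⟨a, b, hev, hE, hne⟩)
    exact ⟨b, hev, hE⟩
  · rintro ⟨b, hev, hE⟩
    by_cases hab : M a = some b
    · cases hev with
      | base _ hb => exact absurd hab (hb a)
      | step a' _ hodd hab' =>
        obtain rfl := hM a' a b hab' hab
        exact hodd
    · exact OddA.step a b hev hE hab

end GEProof

/-- Gallai–Edmonds partition independence: the even, odd (and hence unreachable)
classes are the same for every maximum matching of the bipartite graph `E`. -/
theorem gallai_edmonds_independence {α β : Type*} [Fintype α]
    (E : α → β → Prop) (M M' : α → Option β)
    (hM : IsMaxMatchingOn E M) (hM' : IsMaxMatchingOn E M') :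
    (∀ a, EvenA E M a ↔ EvenA E M' a) ∧ (∀ a, OddA E M a ↔ OddA E M' a) ∧
    (∀ a, UnreachA E M a ↔ UnreachA E M' a) ∧
    (∀ b, EvenB E M b ↔ EvenB E M' b) ∧ (∀ b, OddB E M b ↔ OddB E M' b) ∧
    (∀ b, UnreachB E M b ↔ UnreachB E M' b) := by
  have hEA : ∀ a, EvenA E M a ↔ EvenA E M' a :=
    fun a => ⟨GEProof.evenA_mono hM hM', GEProof.evenA_mono hM' hM⟩
  have hEB : ∀ b, EvenB E M b ↔ EvenB E M' b :=
    fun b => ⟨GEProof.evenB_mono hM hM', GEProof.evenB_mono hM' hM⟩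
  have hOB : ∀ b, OddB E M b ↔ OddB E M' b := by
    intro b
    rw [GEProof.oddB_iff, GEProof.oddB_iff]
    exact exists_congr fun a => and_congr_left' (hEA a)
  have hOA : ∀ a, OddA E M a ↔ OddA E M' a := by
    intro a
    rw [GEProof.oddA_iff hM.1.2, GEProof.oddA_iff hM'.1.2]
    exact exists_congr fun b => and_congr_left' (hEB b)
  refine ⟨hEA, hOA, fun a => ?_, hEB, hOB, fun b => ?_⟩
  · unfold UnreachA
    rw [hEA a, hOA a]
  · unfold UnreachB
    rw [hEB b, hOB b]
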